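/- For n = 2 and Q a bounded one-dimensional face of P_a with endpoints v = (a,b) and v' = (a',b') in Γ_a ∩ Q, a < a', b > b', such that G_Q is generated by v − v': every u ∈ (M_Q \ M_Q') ∩ V_Q is congruent modulo G_Q, up to adding an element of Γ_a ∩ Q and removing generators, to an element of the finite box {(i,j) ∈ Z_{>0}^2 : i ≤ a', j ≤ b}; consequently R_Q = ∪_{k≥0} {−L_Q(u) + k : u ∈ E_Q ∩ (M_Q^{(k)} \ M_Q^{(k+1)})} where E_Q = {(i,j) ∈ Z_{>0}^2 : i ≤ a', j ≤ b}. -/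

import Mathlib

open Set

namespace BS

def toR {n : ℕ} (u : Fin n → ℤ) : Fin n → ℝ := fun i => (u i : ℝ)

def natR {n : ℕ} (u : Fin n → ℕ) : Fin n → ℝ := fun i => (u i : ℝ)

def natZ {n : ℕ} (u : Fin n → ℕ) : Fin n → ℤ := fun i => (u i : ℤ)

/-- `Γ` is the exponent set of a nonzero monomial ideal. -/
def IsMonIdeal {n : ℕ} (Γ : Set (Fin n → ℕ)) : Prop :=
  Γ.Nonempty ∧ ∀ u ∈ Γ, ∀ w : Fin n → ℕ, u + w ∈ Γ

/-- The Newton polyhedron: convex hull of the exponent set. -/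
def newton {n : ℕ} (Γ : Set (Fin n → ℕ)) : Set (Fin n → ℝ) :=
  convexHull ℝ (natR '' Γ)

/-- The subsemigroup (containing 0) of ℤⁿ generated by differences u - v,
u ∈ Γ, v ∈ Γ ∩ Q. -/
def diffMonoid {n : ℕ} (Γ : Set (Fin n → ℕ)) (Q : Set (Fin n → ℝ)) :
    AddSubmonoid (Fin n → ℤ) :=
  AddSubmonoid.closure {d | ∃ u ∈ Γ, ∃ v ∈ Γ, natR v ∈ Q ∧ d = natZ u - natZ v}

/-- M_Q : the translate by e = (1,...,1) of the difference semigroup. -/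
def MQ {n : ℕ} (Γ : Set (Fin n → ℕ)) (Q : Set (Fin n → ℝ)) : Set (Fin n → ℤ) :=
  {m | m - 1 ∈ diffMonoid Γ Q}

/-- M_Q^{(k)} = k·v₀ + M_Q. -/
def MQk {n : ℕ} (Γ : Set (Fin n → ℕ)) (Q : Set (Fin n → ℝ)) (v0 : Fin n → ℕ) (k : ℕ) :
    Set (Fin n → ℤ) :=
  {m | m - (k : ℤ) • natZ v0 ∈ MQ Γ Q}

/-- V_Q : linear span of the face Q. -/
def VQ {n : ℕ} (Q : Set (Fin n → ℝ)) : Submodule ℝ (Fin n → ℝ) := Submodule.span ℝ Q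

/-- R_Q = { -L_Q(u) : u ∈ (M_Q \ M_Q') ∩ V_Q }. -/
def RQ {n : ℕ} (Γ : Set (Fin n → ℕ)) (Q : Set (Fin n → ℝ)) (v0 : Fin n → ℕ)
    (L : (Fin n → ℝ) →ₗ[ℝ] ℝ) : Set ℝ :=
  {x | ∃ u ∈ MQ Γ Q \ MQk Γ Q v0 1, toR u ∈ VQ Q ∧ x = - L (toR u)}

/-- Q is contained in some coordinate hyperplane. -/
def InCoordHyp {n : ℕ} (Q : Set (Fin n → ℝ)) : Prop := ∃ i, ∀ q ∈ Q, q i = 0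

/-- The subgroup G_Q of ℤⁿ generated by differences of elements of Γ ∩ Q. -/
def diffGroup {n : ℕ} (Γ : Set (Fin n → ℕ)) (Q : Set (Fin n → ℝ)) :
    AddSubgroup (Fin n → ℤ) :=
  AddSubgroup.closure
    {d | ∃ u ∈ Γ, natR u ∈ Q ∧ ∃ v ∈ Γ, natR v ∈ Q ∧ d = natZ u - natZ v}

end BS

/-- For n = 2 and a bounded one-dimensional face Q with lattice points v = (a,b),
v' = (a',b'), a < a', b > b', G_Q generated by v - v': every element of
(M_Q \\ M_Q') ∩ V_Q yields, after shifting by a multiple of v, an element of the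
box E_Q = {(i,j) : 1 ≤ i ≤ a', 1 ≤ j ≤ b} giving the same root; consequently
R_Q = ∪ₖ { -L_Q(u) + k : u ∈ E_Q ∩ (M_Q^{(k)} \\ M_Q^{(k+1)}) }. -/


lemma arith_key (p q a b x y : ℤ) (hp : 0 < p) (hq : 0 < q) (ha : 0 ≤ a) (hb : q ≤ b)
    (gap : ∀ m : ℤ, ¬(a + 1 - m * p ≤ x ∧ b + 1 + m * q ≤ y)) :
    ∃ (M : ℤ) (s : ℕ), 1 ≤ x + s * a - M * p ∧ x + s * a - M * p ≤ a + p ∧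
      1 ≤ y + s * b + M * q ∧ y + s * b + M * q ≤ b := by
  have hq0 : (0:ℤ) ≤ q := hq.le
  have hex : ∃ s : ℕ, 1 ≤ y + (s:ℤ) * b + ((x + (s:ℤ) * a - 1) / p) * q := by
    refine ⟨(p + p*q - p*y - q*x).toNat, ?_⟩
    set s₁ : ℕ := (p + p*q - p*y - q*x).toNat with hs₁
    set z : ℤ := x + (s₁ : ℤ) * a - 1 with hz
    have hdm := Int.mul_ediv_add_emod z p
    have hm0 : 0 ≤ z % p := Int.emod_nonneg z hp.ne'
    have hm1 : z % p < p := Int.emod_lt_of_pos z hp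
    have hs1 : (p + p*q - p*y - q*x : ℤ) ≤ (s₁ : ℤ) := Int.self_le_toNat _
    have hs1' : (0:ℤ) ≤ (s₁ : ℤ) := Int.natCast_nonneg _
    have hpbqa : (1:ℤ) ≤ p * b + q * a := by nlinarith
    have hkey : p + p*q - p*y - q*x ≤ (s₁:ℤ) * (p * b + q * a) := by nlinarith
    have hdiv : x + (s₁:ℤ) * a - p ≤ p * (z / p) := by omega
    have h5 : p * 1 ≤ p * (y + (s₁:ℤ) * b + (z / p) * q) := by nlinarith
    have := le_of_mul_le_mul_left h5 hp
    simpa [hz] using this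
  obtain ⟨s₀, hPs₀, hmin⟩ : ∃ s₀ : ℕ, (1 ≤ y + (s₀:ℤ) * b + ((x + (s₀:ℤ) * a - 1) / p) * q) ∧
      ∀ t : ℕ, t < s₀ → ¬(1 ≤ y + (t:ℤ) * b + ((x + (t:ℤ) * a - 1) / p) * q) :=
    ⟨Nat.find hex, Nat.find_spec hex, fun t ht => Nat.find_min hex ht⟩
  obtain ⟨x', hx'⟩ : ∃ x', x' = x + (s₀:ℤ) * a := ⟨_, rfl⟩
  obtain ⟨y', hy'⟩ : ∃ y', y' = y + (s₀:ℤ) * b := ⟨_, rfl⟩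
  obtain ⟨M₂, hM₂⟩ : ∃ M, M = (x' - 1) / p := ⟨_, rfl⟩
  obtain ⟨Mt, hMt⟩ : ∃ M, M = (b - y') / q := ⟨_, rfl⟩
  have hdm2 : p * M₂ + (x' - 1) % p = x' - 1 := by rw [hM₂]; exact Int.mul_ediv_add_emod _ _
  have hm20 : 0 ≤ (x' - 1) % p := Int.emod_nonneg _ hp.ne'
  have hm21 : (x' - 1) % p < p := Int.emod_lt_of_pos _ hp
  have hdmt : q * Mt + (b - y') % q = b - y' := by rw [hMt]; exact Int.mul_ediv_add_emod _ _
  have hmt0 : 0 ≤ (b - y') % q := Int.emod_nonneg _ hq.ne'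
  have hmt1 : (b - y') % q < q := Int.emod_lt_of_pos _ hq
  have hPs₀' : 1 ≤ y' + M₂ * q := by rw [hy', hM₂, hx']; exact hPs₀
  have c1 : M₂ * p = p * M₂ := mul_comm _ _
  have c2 : Mt * p = p * Mt := mul_comm _ _
  have c3 : Mt * q = q * Mt := mul_comm _ _
  by_cases hM : M₂ ≤ Mt
  · have c4 : M₂ * q ≤ Mt * q := mul_le_mul_of_nonneg_right hM hq0
    exact ⟨M₂, s₀, by omega, by omega, by omega, by omega⟩
  · push_neg at hM
    have c5 : (Mt + 1) * p ≤ M₂ * p := mul_le_mul_of_nonneg_right (by omega) hp.le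
    have c6 : (Mt + 1) * p = Mt * p + p := by ring
    refine ⟨Mt, s₀, by omega, ?_, by omega, by omega⟩
    by_contra hX
    push_neg at hX
    have h1 : a + 1 + p * Mt + p ≤ x' := by omega
    have h2 : b + 1 ≤ y' + q * Mt + q := by omega
    rcases Nat.eq_zero_or_pos s₀ with h0 | hpos
    · subst h0
      simp only [Nat.cast_zero, zero_mul, add_zero] at hx' hy'
      refine gap (-(Mt+1)) ⟨?_, ?_⟩
      · have r1 : -(Mt+1) * p = -(p*Mt) - p := by ring
        omega
      · have r2 : -(Mt+1) * q = -(q*Mt) - q := by ring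
        omega
    · obtain ⟨t, rfl⟩ : ∃ t, s₀ = t + 1 := ⟨s₀ - 1, by omega⟩
      refine hmin t (by omega) ?_
      have hxe : x + (t:ℤ) * a - 1 = x' - 1 - a := by rw [hx']; push_cast; ring
      have hdt : Mt + 1 ≤ (x + (t:ℤ) * a - 1) / p := by
        rw [Int.le_ediv_iff_mul_le hp, hxe]
        have : (Mt + 1) * p = p * Mt + p := by ring
        omega
      have hmul : (Mt+1) * q ≤ ((x + (t:ℤ) * a - 1) / p) * q :=
        mul_le_mul_of_nonneg_right hdt hq0
      have hye : y + (t:ℤ) * b = y' - b := by rw [hy']; push_cast; ring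
      have r3 : (Mt+1) * q = q * Mt + q := by ring
      omega

theorem box_EQ_description (a b a' b' : ℕ) (haa' : a < a') (hbb' : b' < b)
    (Γ : Set (Fin 2 → ℕ)) (hΓ : BS.IsMonIdeal Γ)
    (Q : Set (Fin 2 → ℝ)) (hface : IsExposed ℝ (BS.newton Γ) Q)
    (hbdd : Bornology.IsBounded Q) (hnc : ¬ BS.InCoordHyp Q)
    (hv : (![a, b] : Fin 2 → ℕ) ∈ Γ) (hvQ : BS.natR ![a, b] ∈ Q)
    (hv' : (![a', b'] : Fin 2 → ℕ) ∈ Γ) (hv'Q : BS.natR ![a', b'] ∈ Q)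
    (hG : BS.diffGroup Γ Q =
      AddSubgroup.closure {BS.natZ ![a, b] - BS.natZ ![a', b']})
    (L : (Fin 2 → ℝ) →ₗ[ℝ] ℝ) (hL1 : ∀ q ∈ Q, L q = 1) :
    (∀ u ∈ BS.MQ Γ Q \ BS.MQk Γ Q ![a, b] 1, BS.toR u ∈ BS.VQ Q →
      ∃ u' ∈ {w : Fin 2 → ℤ | 0 < w 0 ∧ w 0 ≤ (a' : ℤ) ∧ 0 < w 1 ∧ w 1 ≤ (b : ℤ)},
        ∃ k : ℕ, u' ∈ BS.MQk Γ Q ![a, b] k \ BS.MQk Γ Q ![a, b] (k+1) ∧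
          - L (BS.toR u) = - L (BS.toR u') + (k : ℝ)) ∧
    BS.RQ Γ Q ![a, b] L =
      {x : ℝ | ∃ k : ℕ,
        ∃ u ∈ {w : Fin 2 → ℤ | 0 < w 0 ∧ w 0 ≤ (a' : ℤ) ∧ 0 < w 1 ∧ w 1 ≤ (b : ℤ)} ∩
          (BS.MQk Γ Q ![a, b] k \ BS.MQk Γ Q ![a, b] (k+1)),
        x = - L (BS.toR u) + (k : ℝ)} := by
  classical
  set D := BS.diffMonoid Γ Q with hD
  set zv : Fin 2 → ℤ := BS.natZ ![a, b] with hzv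
  set zv' : Fin 2 → ℤ := BS.natZ ![a', b'] with hzv'
  have hzv0 : zv 0 = (a:ℤ) := by simp [hzv, BS.natZ]
  have hzv1 : zv 1 = (b:ℤ) := by simp [hzv, BS.natZ]
  have hzv'0 : zv' 0 = (a':ℤ) := by simp [hzv', BS.natZ]
  have hzv'1 : zv' 1 = (b':ℤ) := by simp [hzv', BS.natZ]
  have hgen : ∀ w ∈ Γ, ∀ z ∈ Γ, BS.natR z ∈ Q → BS.natZ w - BS.natZ z ∈ D :=
    fun w hw z hz hzQ => AddSubmonoid.subset_closure ⟨w, hw, z, hz, hzQ, rfl⟩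
  have hE1 : (![1, 0] : Fin 2 → ℤ) ∈ D := by
    have h := hgen (![a,b] + ![1,0]) (hΓ.2 _ hv _) ![a,b] hv hvQ
    have e : BS.natZ (![a,b] + ![(1:ℕ),0]) - BS.natZ ![a,b] = ![1,0] := by
      funext i; fin_cases i <;> simp [BS.natZ]
    rwa [e] at h
  have hE2 : (![0, 1] : Fin 2 → ℤ) ∈ D := by
    have h := hgen (![a,b] + ![0,1]) (hΓ.2 _ hv _) ![a,b] hv hvQ
    have e : BS.natZ (![a,b] + ![(0:ℕ),1]) - BS.natZ ![a,b] = ![0,1] := by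
      funext i; fin_cases i <;> simp [BS.natZ]
    rwa [e] at h
  have hg : zv - zv' ∈ D := hgen _ hv _ hv' hv'Q
  have hg' : zv' - zv ∈ D := hgen _ hv' _ hv hvQ
  have hzsmul : ∀ m : ℤ, m • (zv - zv') ∈ D := by
    intro m
    rcases Int.eq_nat_or_neg m with ⟨n, rfl | rfl⟩
    · rw [natCast_zsmul]; exact AddSubmonoid.nsmul_mem _ hg n
    · have e : (-(n:ℤ)) • (zv - zv') = (n:ℤ) • (zv' - zv) := by
        rw [neg_smul, ← smul_neg, neg_sub]
      rw [e, natCast_zsmul]; exact AddSubmonoid.nsmul_mem _ hg' n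
  have hnn : ∀ n : Fin 2 → ℤ, 0 ≤ n 0 → 0 ≤ n 1 → n ∈ D := by
    intro n h0 h1
    have e : n = (n 0).toNat • (![1,0] : Fin 2 → ℤ) + (n 1).toNat • (![0,1] : Fin 2 → ℤ) := by
      funext i
      fin_cases i <;>
        simp [Pi.smul_apply, smul_eq_mul, Int.toNat_of_nonneg, h0, h1]
    rw [e]
    exact add_mem (AddSubmonoid.nsmul_mem _ hE1 _) (AddSubmonoid.nsmul_mem _ hE2 _)
  have hMQk_iff : ∀ (w : Fin 2 → ℤ) (k : ℕ),
      w ∈ BS.MQk Γ Q ![a,b] k ↔ w - (k:ℤ) • zv - 1 ∈ D := fun w k => Iff.rfl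
  have hgap : ∀ u : Fin 2 → ℤ, u ∉ BS.MQk Γ Q ![a,b] 1 → ∀ m : ℤ,
      ¬((a:ℤ) + 1 - m * ((a':ℤ) - a) ≤ u 0 ∧ (b:ℤ) + 1 + m * ((b:ℤ) - b') ≤ u 1) := by
    intro u hu m hm
    apply hu
    rw [hMQk_iff]
    have key : u - ((1:ℕ):ℤ) • zv - 1 =
        (u - 1 - zv - m • (zv - zv')) + m • (zv - zv') := by
      push_cast
      rw [one_smul]
      abel
    rw [key]
    refine add_mem (hnn _ ?_ ?_) (hzsmul m)
    · have e : (u - 1 - zv - m • (zv - zv')) 0 = u 0 - 1 - zv 0 - m * (zv 0 - zv' 0) := rfl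
      rw [e, hzv0, hzv'0]
      nlinarith [hm.1]
    · have e : (u - 1 - zv - m • (zv - zv')) 1 = u 1 - 1 - zv 1 - m * (zv 1 - zv' 1) := rfl
      rw [e, hzv1, hzv'1]
      nlinarith [hm.2]
    -- PART 1
  have part1 : ∀ u ∈ BS.MQ Γ Q \ BS.MQk Γ Q ![a, b] 1, BS.toR u ∈ BS.VQ Q →
      ∃ u' ∈ {w : Fin 2 → ℤ | 0 < w 0 ∧ w 0 ≤ (a' : ℤ) ∧ 0 < w 1 ∧ w 1 ≤ (b : ℤ)},
        ∃ k : ℕ, u' ∈ BS.MQk Γ Q ![a, b] k \ BS.MQk Γ Q ![a, b] (k+1) ∧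
          - L (BS.toR u) = - L (BS.toR u') + (k : ℝ) := by
    rintro u ⟨huM, huM1⟩ -
    obtain ⟨M, s, hX1, hX2, hY1, hY2⟩ :=
      arith_key ((a':ℤ) - a) ((b:ℤ) - b') a b (u 0) (u 1)
        (by omega) (by omega) (by omega) (by omega) (hgap u huM1)
    refine ⟨u + M • (zv - zv') + (s:ℤ) • zv, ?_, s, ⟨?_, ?_⟩, ?_⟩
    · simp only [Set.mem_setOf_eq]
      have c0 : (u + M • (zv - zv') + (s:ℤ) • zv) 0 = u 0 + M * ((a:ℤ) - a') + (s:ℤ) * a := by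
        simp [Pi.add_apply, Pi.smul_apply, Pi.sub_apply, smul_eq_mul, hzv0, hzv'0]
      have c1 : (u + M • (zv - zv') + (s:ℤ) • zv) 1 = u 1 + M * ((b:ℤ) - b') + (s:ℤ) * b := by
        simp [Pi.add_apply, Pi.smul_apply, Pi.sub_apply, smul_eq_mul, hzv1, hzv'1]
      rw [c0, c1]
      have r0 : M * ((a:ℤ) - a') = -(M * ((a':ℤ) - a)) := by ring
      exact ⟨by omega, by omega, by omega, by omega⟩
    · rw [hMQk_iff]
      have key : u + M • (zv - zv') + (s:ℤ) • zv - (s:ℤ) • zv - 1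
          = (u - 1) + M • (zv - zv') := by abel
      rw [key]
      exact add_mem huM (hzsmul M)
    · intro hcon
      rw [hMQk_iff] at hcon
      apply huM1
      rw [hMQk_iff]
      have key : u - ((1:ℕ):ℤ) • zv - 1
          = (u + M • (zv - zv') + (s:ℤ) • zv - (((s+1:ℕ)):ℤ) • zv - 1)
            + (-M) • (zv - zv') := by
        push_cast
        rw [add_smul, one_smul, neg_smul]
        abel
      rw [key]
      exact add_mem hcon (hzsmul (-M))
    · have e : BS.toR (u + M • (zv - zv') + (s:ℤ) • zv)
          = BS.toR u + (M:ℝ) • (BS.natR ![a,b] - BS.natR ![a',b']) + (s:ℝ) • BS.natR ![a,b] := by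
        funext i
        simp [BS.toR, BS.natR, hzv, hzv', BS.natZ, Pi.smul_apply, smul_eq_mul]
      rw [e, map_add, map_add, map_smul, map_smul, map_sub, hL1 _ hvQ, hL1 _ hv'Q]
      simp
  -- span is everything
  have hspan : ∀ w : Fin 2 → ℝ, w ∈ BS.VQ Q := by
    have h1 : (a:ℝ) < a' := by exact_mod_cast haa'
    have h2 : (b':ℝ) < b := by exact_mod_cast hbb'
    have h3 : (0:ℝ) ≤ a := by positivity
    have h4 : (0:ℝ) ≤ b' := by positivity
    have hdet : (a:ℝ) * b' - a' * b ≠ 0 := by nlinarith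
    intro w
    have hrep : w = ((w 0 * b' - w 1 * a')/((a:ℝ)*b' - a'*b)) • BS.natR ![a,b]
        + ((w 1 * a - w 0 * b)/((a:ℝ)*b' - a'*b)) • BS.natR ![a',b'] := by
      funext i
      fin_cases i <;>
        (simp [BS.natR, Pi.smul_apply, smul_eq_mul]; rw [div_mul_eq_mul_div, div_mul_eq_mul_div, ← add_div, eq_div_iff hdet]; ring)
    rw [hrep]
    exact Submodule.add_mem _
      (Submodule.smul_mem _ _ (Submodule.subset_span hvQ))
      (Submodule.smul_mem _ _ (Submodule.subset_span hv'Q))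
  refine ⟨part1, ?_⟩
  ext x
  simp only [Set.mem_setOf_eq]
  constructor
  · rintro ⟨u, hu, huV, rfl⟩
    obtain ⟨u', hbox, k, hmem, heq⟩ := part1 u hu huV
    exact ⟨k, u', ⟨hbox, hmem⟩, heq⟩
  · rintro ⟨k, u, ⟨hbox, hk, hk1⟩, rfl⟩
    refine ⟨u - (k:ℤ) • zv, ⟨?_, ?_⟩, hspan _, ?_⟩
    · exact (hMQk_iff u k).mp hk
    · intro hcon
      rw [hMQk_iff] at hcon
      apply hk1
      rw [hMQk_iff]
      have key : u - ((k+1:ℕ):ℤ) • zv - 1 = (u - (k:ℤ) • zv) - ((1:ℕ):ℤ) • zv - 1 := by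
        push_cast
        rw [add_smul, one_smul]
        abel
      rw [key]
      exact hcon
    · have e2 : BS.toR (u - (k:ℤ) • zv) = BS.toR u - (k:ℝ) • BS.natR ![a,b] := by
        funext i
        simp [BS.toR, BS.natR, hzv, BS.natZ, Pi.smul_apply, smul_eq_mul]
      rw [e2, map_sub, map_smul, hL1 _ hvQ]
      simp
      ring
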